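/- For d ≥ 2, the mean number of internal vertices of the typical maximal segment, given by Σ_{n≥0} n · p₁,₀(n) with p₁,₀(n) = d(d−2)! ∫₀¹∫₀^{s_{d−1}}…∫₀^{s₂} s_{d−1}² (d − 2s_{d−1} − … − s₁)^n / (d − s_{d−1} − … − s₁)^{n+1} ds₁…ds_{d−1}, equals (d² − d + 2) / (2(d−1)). -/

import Mathlib

open MeasureTheory Set
open scoped ENNReal NNReal

def T (m : ℕ) (x : ℝ) : Set (Fin m → ℝ) := {s | StrictMono s ∧ ∀ i, s i ∈ Set.Ioo 0 x}

lemma measurableSet_T (m : ℕ) (x : ℝ) : MeasurableSet (T m x) := by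
  have h1 : MeasurableSet {s : Fin m → ℝ | StrictMono s} := by
    have : {s : Fin m → ℝ | StrictMono s} = ⋂ (i : Fin m) (j : Fin m) (_ : i < j),
        {s | s i < s j} := by
      ext s; simp [StrictMono]
    rw [this]
    exact MeasurableSet.iInter fun i => MeasurableSet.iInter fun j =>
      MeasurableSet.iInter fun _ => measurableSet_lt (measurable_pi_apply i) (measurable_pi_apply j)
  have h2 : MeasurableSet {s : Fin m → ℝ | ∀ i, s i ∈ Set.Ioo 0 x} := by
    have : {s : Fin m → ℝ | ∀ i, s i ∈ Set.Ioo 0 x} = ⋂ (i : Fin m),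
        (fun s : Fin m → ℝ => s i) ⁻¹' (Set.Ioo 0 x) := by
      ext s; simp
    rw [this]
    exact MeasurableSet.iInter fun i => (measurable_pi_apply i) measurableSet_Ioo
  exact h1.inter h2

lemma T_subset (m : ℕ) (x : ℝ) : T m x ⊆ Set.pi Set.univ (fun _ : Fin m => Set.Icc 0 x) :=
  fun s hs i _ => ⟨(hs.2 i).1.le, (hs.2 i).2.le⟩

lemma integrableOn_T {m : ℕ} {x : ℝ} (f : (Fin m → ℝ) → ℝ) (hf : Continuous f) :
    IntegrableOn f (T m x) :=
  (hf.continuousOn.integrableOn_compact (isCompact_univ_pi fun _ => isCompact_Icc)).mono_set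
    (T_subset m x)

lemma snoc_mem_T_iff {m : ℕ} {x y : ℝ} {s : Fin m → ℝ} :
    (Fin.snoc s y : Fin (m+1) → ℝ) ∈ T (m+1) x ↔ y ∈ Set.Ioo 0 x ∧ s ∈ T m y := by
  constructor
  · rintro ⟨hmono, hmem⟩
    have hy : (Fin.snoc s y : Fin (m+1) → ℝ) (Fin.last m) = y := Fin.snoc_last _ _
    have hsi : ∀ i : Fin m, s i < y := fun i => by
      have := hmono (Fin.castSucc_lt_last i)
      rwa [Fin.snoc_castSucc, hy] at this
    refine ⟨hy ▸ hmem (Fin.last m), ⟨fun i j hij => ?_, fun i => ?_⟩⟩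
    · have := hmono (Fin.castSucc_lt_castSucc_iff.2 hij)
      rwa [Fin.snoc_castSucc, Fin.snoc_castSucc] at this
    · exact ⟨by have := (hmem i.castSucc).1; rwa [Fin.snoc_castSucc] at this, hsi i⟩
  · rintro ⟨hy, hmono, hmem⟩
    have hsi : ∀ i : Fin m, s i < y := fun i => (hmem i).2
    constructor
    · rw [Fin.strictMono_iff_lt_succ]
      intro i
      rw [Fin.snoc_castSucc]
      by_cases h : i.succ = Fin.last m
      · rw [h, Fin.snoc_last]; exact hsi i
      · have : i.succ = Fin.castSucc (i.succ.castPred h) := (Fin.castSucc_castPred _ _).symm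
        rw [this, Fin.snoc_castSucc]
        exact hmono (by rw [← Fin.castSucc_lt_castSucc_iff, ← this]; exact Fin.castSucc_lt_succ)
    · intro i
      refine Fin.lastCases ?_ ?_ i
      · rw [Fin.snoc_last]; exact hy
      · intro j; rw [Fin.snoc_castSucc]; exact ⟨(hmem j).1, (hsi j).trans hy.2⟩

lemma measurableSet_prodT (m : ℕ) (x : ℝ) :
    MeasurableSet {p : ℝ × (Fin m → ℝ) | p.1 ∈ Set.Ioo 0 x ∧ p.2 ∈ T m p.1} := by
  have heval : ∀ i : Fin m, Measurable fun p : ℝ × (Fin m → ℝ) => p.2 i :=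
    fun i => measurable_snd.eval
  apply MeasurableSet.inter
  · exact measurable_fst measurableSet_Ioo
  · have h1 : MeasurableSet {p : ℝ × (Fin m → ℝ) | StrictMono p.2} := by
      have : {p : ℝ × (Fin m → ℝ) | StrictMono p.2} = ⋂ (i : Fin m) (j : Fin m) (_ : i < j),
          {p | p.2 i < p.2 j} := by
        ext p; simp [StrictMono]
      rw [this]
      exact MeasurableSet.iInter fun i => MeasurableSet.iInter fun j =>
        MeasurableSet.iInter fun _ => measurableSet_lt (heval i) (heval j)
    have h2 : MeasurableSet {p : ℝ × (Fin m → ℝ) | ∀ i, p.2 i ∈ Set.Ioo 0 p.1} := by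
      have : {p : ℝ × (Fin m → ℝ) | ∀ i, p.2 i ∈ Set.Ioo 0 p.1} = ⋂ (i : Fin m),
          ({p | 0 < p.2 i} ∩ {p | p.2 i < p.1}) := by
        ext p; simp [Set.mem_Ioo, forall_and]
      rw [this]
      exact MeasurableSet.iInter fun i => (measurableSet_lt measurable_const (heval i)).inter
        (measurableSet_lt (heval i) measurable_fst)
    exact (h1.inter h2 : _)

lemma sliceT (m : ℕ) (x : ℝ) (f : (Fin (m+1) → ℝ) → ℝ) (hf : Continuous f) :
    ∫ s in T (m+1) x, f s = ∫ y in Set.Ioo 0 x, ∫ s in T m y, f (Fin.snoc s y) := by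
  set e := MeasurableEquiv.piFinSuccAbove (fun _ : Fin (m+1) => ℝ) (Fin.last m) with he
  have hmp : MeasurePreserving e volume volume :=
    volume_preserving_piFinSuccAbove _ (Fin.last m)
  have hsymm : ∀ p : ℝ × (Fin m → ℝ), e.symm p = Fin.snoc p.2 p.1 := by
    intro p
    show (Fin.insertNthEquiv (fun _ : Fin (m+1) => ℝ) (Fin.last m)) p = _
    simp [Fin.insertNthEquiv, Fin.insertNth_last']
  have hpre : e.symm ⁻¹' (T (m+1) x) = {p : ℝ × (Fin m → ℝ) | p.1 ∈ Set.Ioo 0 x ∧ p.2 ∈ T m p.1} := by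
    ext p
    simp only [Set.mem_preimage, hsymm, Set.mem_setOf_eq]
    exact snoc_mem_T_iff
  have key := (hmp.symm e).setIntegral_preimage_emb e.symm.measurableEmbedding f (T (m+1) x)
  rw [← key, hpre]
  have hsnoc_cont : Continuous fun p : ℝ × (Fin m → ℝ) => (Fin.snoc p.2 p.1 : Fin (m+1) → ℝ) := by
    apply continuous_pi
    intro i
    refine Fin.lastCases ?_ ?_ i
    · simp only [Fin.snoc_last]; exact continuous_fst
    · intro j; simp only [Fin.snoc_castSucc]; exact (continuous_apply j).comp continuous_snd
  have hFcont : Continuous fun p : ℝ × (Fin m → ℝ) => f (Fin.snoc p.2 p.1) := hf.comp hsnoc_cont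
  simp only [hsymm]
  set A := {p : ℝ × (Fin m → ℝ) | p.1 ∈ Set.Ioo 0 x ∧ p.2 ∈ T m p.1} with hA
  set F := fun p : ℝ × (Fin m → ℝ) => f (Fin.snoc p.2 p.1) with hF
  have hAsub : A ⊆ (Set.Icc 0 x) ×ˢ (Set.pi Set.univ fun _ : Fin m => Set.Icc 0 x) := by
    rintro ⟨y, s⟩ ⟨hy, hs⟩
    exact ⟨⟨hy.1.le, hy.2.le⟩, fun i _ => ⟨(hs.2 i).1.le, ((hs.2 i).2.trans hy.2).le⟩⟩
  have hIntA : IntegrableOn F A (volume.prod volume) := by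
    have hK : IsCompact ((Set.Icc (0:ℝ) x) ×ˢ (Set.pi Set.univ fun _ : Fin m => Set.Icc (0:ℝ) x)) :=
      isCompact_Icc.prod (isCompact_univ_pi fun _ => isCompact_Icc)
    exact (hFcont.continuousOn.integrableOn_compact hK).mono_set hAsub
  have hvol : (volume : Measure (ℝ × (Fin m → ℝ))) = volume.prod volume :=
    Measure.volume_eq_prod _ _
  rw [← integral_indicator (measurableSet_prodT m x), hvol,
    integral_prod _ ((integrable_indicator_iff (measurableSet_prodT m x)).2 hIntA)]
  rw [← integral_indicator measurableSet_Ioo]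
  congr 1
  funext y
  by_cases hy : y ∈ Set.Ioo 0 x
  · have h1 : ∀ s : Fin m → ℝ, A.indicator F (y, s) =
        (T m y).indicator (fun s => f (Fin.snoc s y)) s := by
      intro s
      by_cases hs : s ∈ T m y
      · rw [Set.indicator_of_mem (by exact ⟨hy, hs⟩) F, Set.indicator_of_mem hs]
      · rw [Set.indicator_of_notMem (by simp [hA, hs]) F, Set.indicator_of_notMem hs]
    refine (integral_congr_ae (Filter.Eventually.of_forall h1)).trans ?_
    rw [integral_indicator (measurableSet_T m y), Set.indicator_of_mem hy]
  · have h1 : ∀ s : Fin m → ℝ, A.indicator F (y, s) = 0 := by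
      intro s
      exact Set.indicator_of_notMem (fun hmem => hy hmem.1) F
    refine (integral_congr_ae (Filter.Eventually.of_forall h1)).trans ?_
    rw [integral_zero, Set.indicator_of_notMem hy]

lemma vol_T : ∀ (m : ℕ) (x : ℝ), 0 ≤ x → ∫ _s in T m x, (1:ℝ) = x^m / m.factorial := by
  intro m
  induction m with
  | zero =>
    intro x _
    have hT : T 0 x = Set.univ := by
      ext s
      simp [T, Subsingleton.strictMono s]
    rw [hT]
    rw [setIntegral_const, smul_eq_mul, mul_one, MeasureTheory.volume_pi,
      measureReal_def, Measure.pi_empty_univ]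
    simp
  | succ m ih =>
    intro x hx
    rw [sliceT m x _ continuous_const]
    rw [setIntegral_congr_fun measurableSet_Ioo (fun y hy => ih y hy.1.le)]
    rw [← integral_Ioc_eq_integral_Ioo, ← intervalIntegral.integral_of_le hx]
    rw [intervalIntegral.integral_div, integral_pow]
    have h1 : ((m+1 : ℕ) : ℝ) ≠ 0 := by positivity
    have h2 : ((m.factorial : ℕ) : ℝ) ≠ 0 := Nat.cast_ne_zero.2 m.factorial_ne_zero
    rw [Nat.factorial_succ]
    push_cast
    field_simp
    simp

lemma toReal_vol_T (m : ℕ) {x : ℝ} (hx : 0 ≤ x) :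
    (volume (T m x)).toReal = x^m / m.factorial := by
  have := vol_T m x hx
  rwa [setIntegral_const, smul_eq_mul, mul_one] at this

lemma sum_T : ∀ (m : ℕ) (x : ℝ), 0 ≤ x →
    ∫ s in T m x, (∑ i, s i) = m * x^(m+1) / (2 * m.factorial) := by
  intro m
  induction m with
  | zero =>
    intro x _
    simp
  | succ m ih =>
    intro x hx
    have hcont : Continuous fun s : Fin (m+1) → ℝ => ∑ i, s i :=
      continuous_finset_sum _ fun i _ => continuous_apply i
    rw [sliceT m x _ hcont]
    have h2 : ((m.factorial : ℕ) : ℝ) ≠ 0 := Nat.cast_ne_zero.2 m.factorial_ne_zero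
    have hinner : ∀ y ∈ Set.Ioo (0:ℝ) x,
        (∫ s in T m y, ∑ i, (Fin.snoc s y : Fin (m+1) → ℝ) i)
          = ((m:ℝ) + 2)/(2 * m.factorial) * y^(m+1) := by
      intro y hy
      have hy0 : (0:ℝ) ≤ y := hy.1.le
      have hsum : ∀ s : Fin m → ℝ, (∑ i, (Fin.snoc s y : Fin (m+1) → ℝ) i)
          = (∑ i, s i) + y := by
        intro s
        rw [Fin.sum_univ_castSucc]
        simp [Fin.snoc_castSucc, Fin.snoc_last]
      rw [setIntegral_congr_fun (measurableSet_T m y) (fun s _ => hsum s)]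
      rw [integral_add (integrableOn_T _ (continuous_finset_sum _ fun i _ => continuous_apply i))
        (integrableOn_T _ continuous_const)]
      rw [ih y hy0, setIntegral_const, smul_eq_mul, measureReal_def, toReal_vol_T m hy0]
      field_simp
      ring
    rw [setIntegral_congr_fun measurableSet_Ioo hinner]
    rw [← integral_Ioc_eq_integral_Ioo, ← intervalIntegral.integral_of_le hx]
    rw [intervalIntegral.integral_const_mul, integral_pow]
    have h1 : ((m+2 : ℕ) : ℝ) ≠ 0 := by positivity
    rw [Nat.factorial_succ]
    push_cast
    field_simp
    ring

/-- The mean number of internal vertices of the typical maximal segment of a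
STIT tessellation in `ℝ^d` (`d ≥ 2`, time `t = 1`) equals `(d²−d+2)/(2(d−1))`. -/
theorem stmt_11 (d : ℕ) (hd : 2 ≤ d) :
    ∑' n : ℕ, (n : ℝ) *
      ((d : ℝ) * (Nat.factorial (d - 2)) *
        ∫ s in {s : Fin (d - 1) → ℝ | StrictMono s ∧ ∀ i, s i ∈ Set.Ioo 0 1},
          ((s ⟨d - 2, by omega⟩) ^ 2 *
            ((d : ℝ) - ∑ i, s i - s ⟨d - 2, by omega⟩) ^ n
            / ((d : ℝ) - ∑ i, s i) ^ (n + 1)))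
      = ((d : ℝ) ^ 2 - d + 2) / (2 * ((d : ℝ) - 1)) := by
  obtain ⟨k, rfl⟩ : ∃ k, d = k + 2 := ⟨d - 2, by omega⟩
  show ∑' n : ℕ, (n : ℝ) *
      (((k+2 : ℕ) : ℝ) * (Nat.factorial k) *
        ∫ s in T (k+1) 1,
          ((s (Fin.last k)) ^ 2 *
            (((k+2 : ℕ) : ℝ) - ∑ i, s i - s (Fin.last k)) ^ n
            / (((k+2 : ℕ) : ℝ) - ∑ i, s i) ^ (n + 1)))
      = (((k+2 : ℕ) : ℝ) ^ 2 - ((k+2 : ℕ) : ℝ) + 2) / (2 * (((k+2 : ℕ) : ℝ) - 1))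
  push_cast
  set g : ℕ → (Fin (k+1) → ℝ) → ℝ := fun n s =>
    (s (Fin.last k)) ^ 2 * ((k:ℝ) + 2 - ∑ i, s i - s (Fin.last k)) ^ n
      / ((k:ℝ) + 2 - ∑ i, s i) ^ (n + 1) with hg
  -- pointwise facts
  have hpt : ∀ s ∈ T (k+1) 1,
      HasSum (fun n : ℕ => (n:ℝ) * g n s) ((k:ℝ) + 2 - ∑ i, s i - s (Fin.last k))
      ∧ (∀ n : ℕ, 0 ≤ (n:ℝ) * g n s)
      ∧ (k:ℝ) + 2 - ∑ i, s i - s (Fin.last k) ≤ (k:ℝ) + 2 := by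
    intro s hs
    set M : ℝ := s (Fin.last k) with hM_def
    set Q : ℝ := ∑ i, s i with hQ_def
    have hM : M ∈ Set.Ioo (0:ℝ) 1 := hs.2 (Fin.last k)
    have hQlt : Q < (k:ℝ) + 1 := by
      have h := Finset.sum_lt_sum_of_nonempty (Finset.univ_nonempty)
        (fun i _ => (hs.2 i).2)
      have h2 : ∑ _i : Fin (k+1), (1:ℝ) = (k:ℝ) + 1 := by
        rw [Finset.sum_const, Finset.card_univ, Fintype.card_fin]
        push_cast; ring
      rw [h2] at h
      exact h
    have hQpos : 0 < Q := Finset.sum_pos (fun i _ => (hs.2 i).1) Finset.univ_nonempty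
    set A : ℝ := (k:ℝ) + 2 - Q with hA_def
    have hA1 : 1 < A := by simp only [hA_def]; linarith
    have hA0 : 0 < A := by linarith
    have hAne : A ≠ 0 := hA0.ne'
    have hAM : 0 < A - M := by simp only [hA_def]; linarith [hM.2]
    have hMne : M ≠ 0 := hM.1.ne'
    set q : ℝ := (A - M)/A with hq_def
    have hq0 : 0 ≤ q := div_nonneg hAM.le hA0.le
    have hqlt : q < 1 := (div_lt_one hA0).2 (by linarith [hM.1])
    have hnorm : ‖q‖ < 1 := by rw [Real.norm_eq_abs, abs_of_nonneg hq0]; exact hqlt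
    have h1 := (hasSum_coe_mul_geometric_of_norm_lt_one hnorm).mul_left (M^2/A)
    have heq : ∀ n : ℕ, M^2/A * ((n:ℝ) * q^n) = (n:ℝ) * g n s := by
      intro n
      show M^2/A * ((n:ℝ) * ((A - M)/A)^n) = (n:ℝ) * (M^2 * (A - M)^n / A^(n+1))
      rw [div_pow, pow_succ]
      have hAn : A^n ≠ 0 := pow_ne_zero _ hAne
      field_simp
      ring
    have hval : M^2/A * (q/(1-q)^2) = A - M := by
      have h1q : (1:ℝ) - q = M/A := by
        rw [hq_def]; field_simp; ring
      rw [h1q, hq_def]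
      field_simp
    rw [hval] at h1
    simp only [heq] at h1
    have hnn : ∀ n : ℕ, 0 ≤ (n:ℝ) * g n s := by
      intro n
      have : 0 ≤ g n s := by
        show 0 ≤ M^2 * (A - M)^n / A^(n+1)
        positivity
      positivity
    exact ⟨h1, hnn, by rw [hA_def] at *; linarith [hM.1]⟩
  have hmeasg : ∀ n : ℕ, Measurable (fun s : Fin (k+1) → ℝ => (n:ℝ) * g n s) := by
    intro n
    simp only [hg]
    fun_prop
  -- rewrite each summand
  have hterm : ∀ n : ℕ, (n:ℝ) * (((k:ℝ) + 2) * (Nat.factorial k) * ∫ s in T (k+1) 1, g n s)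
      = ((k:ℝ) + 2) * (Nat.factorial k) * ∫ s in T (k+1) 1, (n:ℝ) * g n s := by
    intro n
    rw [integral_const_mul]
    ring
  rw [tsum_congr hterm, tsum_mul_left]
  have hvolS : volume (T (k+1) 1) ≠ ⊤ := by
    refine ne_top_of_le_ne_top ?_ (measure_mono (T_subset (k+1) 1))
    exact ((isCompact_univ_pi fun _ => isCompact_Icc).measure_lt_top).ne
  have hfin : ∑' n : ℕ, ∫⁻ s, ‖(n:ℝ) * g n s‖₊ ∂(volume.restrict (T (k+1) 1)) ≠ ⊤ := by
    rw [← lintegral_tsum (fun n => (hmeasg n).nnnorm.coe_nnreal_ennreal.aemeasurable)]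
    have hb : ∀ᵐ s ∂(volume.restrict (T (k+1) 1)),
        (∑' n : ℕ, (‖(n:ℝ) * g n s‖₊ : ℝ≥0∞)) ≤ ENNReal.ofReal ((k:ℝ) + 2) := by
      refine (ae_restrict_iff' (measurableSet_T _ _)).2 (Filter.Eventually.of_forall ?_)
      intro s hs
      obtain ⟨hsum, hnn, hle⟩ := hpt s hs
      have h1 : ∀ n : ℕ, (‖(n:ℝ) * g n s‖₊ : ℝ≥0∞) = ENNReal.ofReal ((n:ℝ) * g n s) :=
        fun n => Real.enorm_eq_ofReal (hnn n)
      rw [tsum_congr h1, ← ENNReal.ofReal_tsum_of_nonneg hnn hsum.summable,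
        hsum.tsum_eq]
      exact ENNReal.ofReal_le_ofReal hle
    have hcalc : ∫⁻ s, (∑' n : ℕ, (‖(n:ℝ) * g n s‖₊ : ℝ≥0∞)) ∂(volume.restrict (T (k+1) 1))
      ≤ ENNReal.ofReal ((k:ℝ) + 2) * volume (T (k+1) 1) := by
        refine le_trans (lintegral_mono_ae hb) ?_
        rw [lintegral_const, Measure.restrict_apply_univ]
    exact ne_top_of_le_ne_top (ENNReal.mul_ne_top ENNReal.ofReal_ne_top hvolS) hcalc
  rw [← integral_tsum (fun n => (hmeasg n).aestronglyMeasurable) hfin]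
  rw [setIntegral_congr_fun (measurableSet_T _ _)
    (fun s hs => (hpt s hs).1.tsum_eq)]
  -- now compute the integral
  have hcont : Continuous fun s : Fin (k+1) → ℝ => (k:ℝ) + 2 - ∑ i, s i - s (Fin.last k) :=
    ((continuous_const.sub (continuous_finset_sum _ fun i _ => continuous_apply i)).sub
      (continuous_apply _))
  rw [sliceT k 1 _ hcont]
  have hkfac : ((Nat.factorial k : ℕ) : ℝ) ≠ 0 := Nat.cast_ne_zero.2 k.factorial_ne_zero
  have hinner : ∀ y ∈ Set.Ioo (0:ℝ) 1,
      (∫ s in T k y, ((k:ℝ) + 2 - ∑ i, (Fin.snoc s y : Fin (k+1) → ℝ) i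
          - (Fin.snoc s y : Fin (k+1) → ℝ) (Fin.last k)))
        = ((k:ℝ) + 2)/(Nat.factorial k) * y^k
          - ((k:ℝ) + 4)/(2 * Nat.factorial k) * y^(k+1) := by
    intro y hy
    have hy0 : (0:ℝ) ≤ y := hy.1.le
    have hsum : ∀ s : Fin k → ℝ, ((k:ℝ) + 2 - ∑ i, (Fin.snoc s y : Fin (k+1) → ℝ) i
        - (Fin.snoc s y : Fin (k+1) → ℝ) (Fin.last k))
        = ((k:ℝ) + 2 - 2*y) - ∑ i, s i := by
      intro s
      rw [Fin.sum_univ_castSucc]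
      simp only [Fin.snoc_castSucc, Fin.snoc_last]
      ring
    rw [setIntegral_congr_fun (measurableSet_T k y) (fun s _ => hsum s)]
    rw [integral_sub (integrableOn_T _ continuous_const)
      (integrableOn_T _ (continuous_finset_sum _ fun i _ => continuous_apply i))]
    rw [sum_T k y hy0, setIntegral_const, smul_eq_mul, measureReal_def, toReal_vol_T k hy0]
    field_simp
    ring
  rw [setIntegral_congr_fun measurableSet_Ioo hinner]
  rw [← integral_Ioc_eq_integral_Ioo, ← intervalIntegral.integral_of_le (by norm_num : (0:ℝ) ≤ 1)]
  rw [intervalIntegral.integral_sub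
    ((by fun_prop : Continuous fun x : ℝ => ((k:ℝ) + 2) / (Nat.factorial k : ℝ) * x ^ k).intervalIntegrable _ _)
    ((by fun_prop : Continuous fun x : ℝ => ((k:ℝ) + 4) / (2 * (Nat.factorial k : ℝ)) * x ^ (k + 1)).intervalIntegrable _ _)]
  rw [intervalIntegral.integral_const_mul, intervalIntegral.integral_const_mul,
    integral_pow, integral_pow]
  have h1 : ((k:ℝ) + 1) ≠ 0 := by positivity
  have h2 : ((k:ℝ) + 2) ≠ 0 := by positivity
  have h3 : ((k:ℝ) + 2 - 1) = (k:ℝ) + 1 := by ring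
  rw [h3]
  push_cast
  field_simp
  ring
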